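/- arXiv:1906.07255 — 5 statements merged into one kernel-verified Lean document; each statement's English description precedes it below -/
import Mathlib

section
/- For all real x in [-1,1], x^2 + x + 1 - e^x ≥ (3 - e) x^2. -/
open Nat

lemma exp_tsum' (x : ℝ) : Real.exp x = ∑' n : ℕ, x ^ n / (n ! : ℝ) := by
  rw [Real.exp_eq_exp_ℝ, NormedSpace.exp_eq_tsum_div]

lemma tail_eq (x : ℝ) :
    Real.exp x = 1 + x + ∑' n : ℕ, x ^ (n + 2) / ((n + 2)! : ℝ) := by
  rw [exp_tsum' x]
  have h := Summable.sum_add_tsum_nat_add 2 (Real.summable_pow_div_factorial x)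
  rw [← h]
  simp [Finset.sum_range_succ]

theorem stmt_0 (x : ℝ) (hx : x ∈ Set.Icc (-1 : ℝ) 1) :
    (3 - Real.exp 1) * x ^ 2 ≤ x ^ 2 + x + 1 - Real.exp x := by
  obtain ⟨h1, h2⟩ := hx
  have habs : |x| ≤ 1 := abs_le.2 ⟨h1, h2⟩
  have hs : ∀ y : ℝ, Summable (fun n : ℕ => y ^ (n + 2) / ((n + 2)! : ℝ) : ℕ → ℝ) :=
    fun y => (summable_nat_add_iff 2).2 (Real.summable_pow_div_factorial y)
  have key : ∑' n : ℕ, x ^ (n + 2) / ((n + 2)! : ℝ) ≤ ∑' n : ℕ, x ^ 2 * ((1:ℝ) ^ (n + 2) / ((n + 2)! : ℝ)) := by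
    apply Summable.tsum_le_tsum _ (hs x) ((hs 1).mul_left _)
    intro n
    rw [one_pow, mul_one_div]
    apply div_le_div_of_nonneg_right _ (by positivity)
    calc x ^ (n + 2) ≤ |x ^ (n + 2)| := le_abs_self _
      _ = |x| ^ (n + 2) := by rw [abs_pow]
      _ ≤ |x| ^ 2 := pow_le_pow_of_le_one (abs_nonneg x) habs (by omega)
      _ ≤ x ^ 2 := by rw [sq_abs]
  rw [tsum_mul_left] at key
  have hE : Real.exp 1 = 1 + 1 + ∑' n : ℕ, (1:ℝ) ^ (n + 2) / ((n + 2)! : ℝ) := by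
    simpa using tail_eq 1
  have hX := tail_eq x
  nlinarith [sq_nonneg x, key, hX, hE]
end

section
/- Let A be a d×d real symmetric positive semidefinite matrix with all eigenvalues in [0,1], and let a be a real number. Then (1 - e^a)·A ⪯ I - exp(a·A), i.e., I - exp(a·A) - (1 - e^a)·A is positive semidefinite. -/
open Matrix in
theorem stmt_4 {d : ℕ} (A : Matrix (Fin d) (Fin d) ℝ) (hA : A.PosSemidef)
    (hev : ∀ i, hA.1.eigenvalues i ∈ Set.Icc (0 : ℝ) 1) (a : ℝ) :
    (1 - NormedSpace.exp (a • A) - (1 - Real.exp a) • A).PosSemidef := by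
  set U : Matrix (Fin d) (Fin d) ℝ := (hA.1.eigenvectorUnitary : Matrix (Fin d) (Fin d) ℝ)
    with hUdef
  set μ := hA.1.eigenvalues with hμdef
  have hspec : A = U * Matrix.diagonal μ * star U := by
    have := hA.1.spectral_theorem
    rw [Unitary.conjStarAlgAut_apply] at this
    exact this
  have hUunit : U ∈ Matrix.unitaryGroup (Fin d) ℝ := hA.1.eigenvectorUnitary.2
  have hU1 : U * star U = 1 := by
    simpa using Matrix.mem_unitaryGroup_iff.mp hUunit
  have hconj_smul : ∀ (c : ℝ) (v : Fin d → ℝ),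
      c • (U * Matrix.diagonal v * star U) = U * Matrix.diagonal (c • v) * star U := by
    intro c v
    rw [Matrix.diagonal_smul, Matrix.mul_smul, Matrix.smul_mul]
  have hconj_sub : ∀ (v w : Fin d → ℝ),
      U * Matrix.diagonal v * star U - U * Matrix.diagonal w * star U
        = U * Matrix.diagonal (v - w) * star U := by
    intro v w
    show _ = U * Matrix.diagonal (fun i => v i - w i) * star U
    rw [← Matrix.diagonal_sub, Matrix.mul_sub, Matrix.sub_mul]
  have key : (1 : Matrix (Fin d) (Fin d) ℝ) - NormedSpace.exp (a • A)
      - (1 - Real.exp a) • A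
      = U * Matrix.diagonal (fun i => 1 - Real.exp (a * μ i) - (1 - Real.exp a) * μ i)
        * star U := by
    have hsmul : a • A = U * Matrix.diagonal (fun i => a * μ i) * star U := by
      rw [hspec]
      exact hconj_smul a μ
    have hUinv : IsUnit U := by
      exact Matrix.isUnit_iff_isUnit_det U |>.mpr
        (IsUnit.of_mul_eq_one _ (by
          have := congrArg Matrix.det hU1
          rwa [Matrix.det_mul, Matrix.det_one] at this))
    have hinv : star U = U⁻¹ := Matrix.inv_eq_right_inv hU1 ▸ rfl
    have hexp : NormedSpace.exp (a • A)
        = U * Matrix.diagonal (fun i => Real.exp (a * μ i)) * star U := by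
      rw [hsmul, hinv, Matrix.exp_conj U _ hUinv, Matrix.exp_diagonal]
      congr 1
      ext i
      simp [Pi.exp_def, Real.exp_eq_exp_ℝ]
    have hone : (1 : Matrix (Fin d) (Fin d) ℝ)
        = U * Matrix.diagonal (fun _ => (1:ℝ)) * star U := by
      simp [hU1]
    rw [hexp]
    nth_rewrite 1 [hone]
    nth_rewrite 1 [hspec]
    rw [hconj_smul, hconj_sub, hconj_sub]
    congr 2
  rw [key, Matrix.star_eq_conjTranspose]
  apply Matrix.PosSemidef.mul_mul_conjTranspose_same
  refine Matrix.posSemidef_diagonal_iff.mpr fun i => ?_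
  obtain ⟨h0, h1⟩ := hev i
  have hconv := convexOn_exp.2 (Set.mem_univ 0) (Set.mem_univ a)
    (by linarith : (0:ℝ) ≤ 1 - μ i) h0 (by ring)
  simp only [smul_eq_mul, mul_zero, zero_add, Real.exp_zero, mul_one] at hconv
  rw [mul_comm (μ i) a] at hconv
  nlinarith [hconv]
end

section
/- Let U* be the k×k matrix defined by U*_{ij} = 2·[i=j] - 1 (i.e., +1 on the diagonal and -1 off-diagonal). Define P, Q ∈ ℝ^{k×(k+1)} by P_{ij} = √2·[i=j] + [j=k+1] and Q_{ij} = √2·[i=j] - [j=k+1]. Then P Qᵀ = U*, and consequently the max-norm of U* satisfies γ₂(U*) ≤ 3. -/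
open Matrix

/-- The maximum Euclidean row norm of a matrix. -/
noncomputable def rowNormMax {m d : ℕ} (P : Matrix (Fin m) (Fin d) ℝ) : ℝ :=
  ⨆ i, Real.sqrt (∑ j, (P i j) ^ 2)

/-- The max-norm (γ₂ norm): infimum over factorizations `X = P * Qᵀ` of the
product of maximum row norms. -/
noncomputable def maxNorm {m n : ℕ} (X : Matrix (Fin m) (Fin n) ℝ) : ℝ :=
  sInf {c | ∃ (d : ℕ) (P : Matrix (Fin m) (Fin d) ℝ) (Q : Matrix (Fin n) (Fin d) ℝ),
    X = P * Qᵀ ∧ c = rowNormMax P * rowNormMax Q}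

/-- `U*` with `+1` on the diagonal and `-1` off the diagonal. -/
def Ustar (k : ℕ) : Matrix (Fin k) (Fin k) ℝ :=
  Matrix.of fun i j => if i = j then 1 else -1

/-- `P` with `P_{ij} = √2·[i=j] + [j=k+1]`. -/
noncomputable def Pmat (k : ℕ) : Matrix (Fin k) (Fin (k + 1)) ℝ :=
  Matrix.of fun i j =>
    (if (j : ℕ) = (i : ℕ) then Real.sqrt 2 else 0) + (if (j : ℕ) = k then 1 else 0)

/-- `Q` with `Q_{ij} = √2·[i=j] - [j=k+1]`. -/
noncomputable def Qmat (k : ℕ) : Matrix (Fin k) (Fin (k + 1)) ℝ :=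
  Matrix.of fun i j =>
    (if (j : ℕ) = (i : ℕ) then Real.sqrt 2 else 0) - (if (j : ℕ) = k then 1 else 0)

lemma Pmat_apply (k : ℕ) (i : Fin k) (j : Fin (k+1)) :
    Pmat k i j = (if j = i.castSucc then Real.sqrt 2 else 0)
      + (if j = Fin.last k then 1 else 0) := by
  simp [Pmat, Fin.ext_iff, Fin.last]

lemma Qmat_apply (k : ℕ) (i : Fin k) (j : Fin (k+1)) :
    Qmat k i j = (if j = i.castSucc then Real.sqrt 2 else 0)
      - (if j = Fin.last k then 1 else 0) := by
  simp [Qmat, Fin.ext_iff, Fin.last]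

lemma prod_eq (k : ℕ) : Pmat k * (Qmat k)ᵀ = Ustar k := by
  ext i j
  have hne : i.castSucc ≠ Fin.last k := (Fin.castSucc_lt_last i).ne
  have hne' : j.castSucc ≠ Fin.last k := (Fin.castSucc_lt_last j).ne
  simp only [mul_apply, transpose_apply, Pmat_apply, Qmat_apply, Ustar, of_apply]
  simp [mul_sub, add_mul, ite_mul, mul_ite, Finset.sum_sub_distrib, Finset.sum_add_distrib,
    Finset.sum_ite_eq', hne, hne', Fin.castSucc_inj]
  rcases eq_or_ne i j with h | h
  · simp [h, hne'.symm, Real.mul_self_sqrt]; norm_num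
  · simp [h.symm, h, hne.symm, hne'.symm,
      (fun hc => h (Fin.castSucc_inj.mp hc) : i.castSucc ≠ j.castSucc)]

lemma rowP (k : ℕ) (i : Fin k) : ∑ j, (Pmat k i j)^2 = 3 := by
  have hne : i.castSucc ≠ Fin.last k := (Fin.castSucc_lt_last i).ne
  simp only [Pmat_apply]
  simp [add_sq, Finset.sum_add_distrib, ite_mul, mul_ite, Finset.sum_ite_eq', hne, ite_pow,
    Real.sq_sqrt, hne.symm]
  norm_num

lemma rowQ (k : ℕ) (i : Fin k) : ∑ j, (Qmat k i j)^2 = 3 := by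
  have hne : i.castSucc ≠ Fin.last k := (Fin.castSucc_lt_last i).ne
  simp only [Qmat_apply]
  simp [sub_sq, Finset.sum_add_distrib, Finset.sum_sub_distrib, ite_mul, mul_ite,
    Finset.sum_ite_eq', hne, ite_pow, Real.sq_sqrt, hne.symm]
  norm_num

lemma rowNormMax_nonneg {m d : ℕ} (P : Matrix (Fin m) (Fin d) ℝ) : 0 ≤ rowNormMax P := by
  unfold rowNormMax
  rcases isEmpty_or_nonempty (Fin m) with h | h
  · simp [Real.iSup_of_isEmpty]
  · exact le_ciSup_of_le (Set.Finite.bddAbove (Set.finite_range _)) h.some (Real.sqrt_nonneg _)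

theorem stmt_8 (k : ℕ) (hk : 0 < k) :
    Pmat k * (Qmat k)ᵀ = Ustar k ∧ maxNorm (Ustar k) ≤ 3 := by
  haveI : Nonempty (Fin k) := Fin.pos_iff_nonempty.mp hk
  refine ⟨prod_eq k, ?_⟩
  have hrP : rowNormMax (Pmat k) = Real.sqrt 3 := by
    unfold rowNormMax
    have h : ∀ i : Fin k, Real.sqrt (∑ j, (Pmat k i j)^2) = Real.sqrt 3 := fun i => by
      rw [rowP]
    simp only [h]
    exact ciSup_const
  have hrQ : rowNormMax (Qmat k) = Real.sqrt 3 := by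
    unfold rowNormMax
    have h : ∀ i : Fin k, Real.sqrt (∑ j, (Qmat k i j)^2) = Real.sqrt 3 := fun i => by
      rw [rowQ]
    simp only [h]
    exact ciSup_const
  apply csInf_le
  · refine ⟨0, ?_⟩
    rintro c ⟨d, P, Q, -, rfl⟩
    exact mul_nonneg (rowNormMax_nonneg P) (rowNormMax_nonneg Q)
  · refine ⟨k + 1, Pmat k, Qmat k, (prod_eq k).symm, ?_⟩
    rw [hrP, hrQ, Real.mul_self_sqrt (by norm_num)]
end

section
/- The max-norm is block-invariant: for all positive integers m ≥ k and n ≥ ℓ, every block expansion matrix R ∈ {0,1}^{m×k} (each row has exactly one 1, and R has rank k), every block expansion matrix C ∈ {0,1}^{n×ℓ}, and every matrix X ∈ ℝ^{k×ℓ}, one has γ₂(R X Cᵀ) = γ₂(X). -/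
open Matrix

/-- A block expansion matrix: each row is a standard basis vector and the rank is
full (each column is used at least once). -/
def IsBlockExpansion {m k : ℕ} (R : Matrix (Fin m) (Fin k) ℝ) : Prop :=
  (∀ i, ∃ j, ∀ j', R i j' = if j' = j then 1 else 0) ∧ R.rank = k

lemma rowNormMax_submatrix_le {a b d : ℕ} [Nonempty (Fin b)] (P : Matrix (Fin a) (Fin d) ℝ)
    (f : Fin b → Fin a) : rowNormMax (P.submatrix f id) ≤ rowNormMax P := by
  unfold rowNormMax
  refine ciSup_le fun j => ?_
  exact le_ciSup (f := fun i => Real.sqrt (∑ jj, (P i jj) ^ 2))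
    (Set.Finite.bddAbove (Set.finite_range _)) (f j)

lemma rowNormMax_submatrix_eq {a b d : ℕ} [Nonempty (Fin b)] (P : Matrix (Fin a) (Fin d) ℝ)
    (f : Fin b → Fin a) (hf : Function.Surjective f) :
    rowNormMax (P.submatrix f id) = rowNormMax P := by
  haveI : Nonempty (Fin a) := ⟨f (Classical.arbitrary _)⟩
  refine le_antisymm (rowNormMax_submatrix_le P f) ?_
  unfold rowNormMax
  refine ciSup_le fun i => ?_
  obtain ⟨j, rfl⟩ := hf i
  exact le_ciSup (f := fun j => Real.sqrt (∑ jj, (P.submatrix f id j jj) ^ 2))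
    (Set.Finite.bddAbove (Set.finite_range _)) j

lemma blockexp {m k : ℕ} {R : Matrix (Fin m) (Fin k) ℝ} (hR : IsBlockExpansion R) :
    ∃ r : Fin m → Fin k, Function.Surjective r ∧
      ∀ i j', R i j' = if j' = r i then 1 else 0 := by
  obtain ⟨hrow, hrank⟩ := hR
  choose r hr using hrow
  refine ⟨r, ?_, hr⟩
  by_contra h
  unfold Function.Surjective at h
  push_neg at h
  obtain ⟨j₀, hj₀⟩ := h
  have hker : R.mulVecLin (Pi.single j₀ 1) = 0 := by
    funext i
    have : ∀ j, R i j * (Pi.single j₀ 1 : Fin k → ℝ) j = if j = j₀ then R i j₀ else 0 := by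
      intro j
      by_cases hj : j = j₀ <;> simp [hj, Pi.single_apply]
    simp only [Matrix.mulVecLin_apply, Matrix.mulVec, dotProduct, this,
      Finset.sum_ite_eq', Finset.mem_univ, if_true, Pi.zero_apply]
    rw [hr i j₀, if_neg]
    exact fun hcon => hj₀ i hcon.symm
  have hmem : (⟨Pi.single j₀ 1, by simp [LinearMap.mem_ker, hker]⟩ :
      LinearMap.ker R.mulVecLin) ≠ 0 := by
    intro hcon
    have := congrArg Subtype.val hcon
    simp only [Submodule.coe_zero] at this
    have := congrFun this j₀
    simp at this
  have hpos : 0 < Module.finrank ℝ (LinearMap.ker R.mulVecLin) :=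
    Module.finrank_pos_iff_exists_ne_zero.mpr ⟨_, hmem⟩
  have h1 := LinearMap.finrank_range_add_finrank_ker R.mulVecLin
  rw [Module.finrank_fin_fun] at h1
  have : R.rank = Module.finrank ℝ (LinearMap.range R.mulVecLin) := rfl
  omega

lemma mul_blockexp_left {m k d : ℕ} {R : Matrix (Fin m) (Fin k) ℝ} {r : Fin m → Fin k}
    (hr : ∀ i j', R i j' = if j' = r i then 1 else 0) (P : Matrix (Fin k) (Fin d) ℝ) :
    R * P = P.submatrix r id := by
  ext i j
  simp [Matrix.mul_apply, hr i, ite_mul, Finset.sum_ite_eq', Matrix.submatrix_apply]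

lemma mul_blockexp_right {n ℓ k : ℕ} {C : Matrix (Fin n) (Fin ℓ) ℝ} {c : Fin n → Fin ℓ}
    (hc : ∀ i j', C i j' = if j' = c i then 1 else 0) (Y : Matrix (Fin k) (Fin ℓ) ℝ) :
    Y * Cᵀ = Y.submatrix id c := by
  ext i i'
  simp [Matrix.mul_apply, Matrix.transpose_apply, hc i', mul_ite, Finset.sum_ite_eq',
    Matrix.submatrix_apply]

theorem stmt_9 {m k n ℓ : ℕ} (hk : 0 < k) (hℓ : 0 < ℓ) (hmk : k ≤ m) (hnl : ℓ ≤ n)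
    (R : Matrix (Fin m) (Fin k) ℝ) (hR : IsBlockExpansion R)
    (C : Matrix (Fin n) (Fin ℓ) ℝ) (hC : IsBlockExpansion C)
    (X : Matrix (Fin k) (Fin ℓ) ℝ) :
    maxNorm (R * X * Cᵀ) = maxNorm X := by
  haveI hk' : Nonempty (Fin k) := ⟨⟨0, hk⟩⟩
  haveI hl' : Nonempty (Fin ℓ) := ⟨⟨0, hℓ⟩⟩
  haveI hm' : Nonempty (Fin m) := ⟨⟨0, lt_of_lt_of_le hk hmk⟩⟩
  haveI hn' : Nonempty (Fin n) := ⟨⟨0, lt_of_lt_of_le hℓ hnl⟩⟩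
  obtain ⟨r, hrs, hr⟩ := blockexp hR
  obtain ⟨c, hcs, hc⟩ := blockexp hC
  set S₁ := {cc | ∃ (d : ℕ) (P : Matrix (Fin m) (Fin d) ℝ) (Q : Matrix (Fin n) (Fin d) ℝ),
    R * X * Cᵀ = P * Qᵀ ∧ cc = rowNormMax P * rowNormMax Q} with hS₁
  set S₂ := {cc | ∃ (d : ℕ) (P : Matrix (Fin k) (Fin d) ℝ) (Q : Matrix (Fin ℓ) (Fin d) ℝ),
    X = P * Qᵀ ∧ cc = rowNormMax P * rowNormMax Q} with hS₂
  have hbdd₁ : BddBelow S₁ := by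
    refine ⟨0, ?_⟩
    rintro b ⟨d, P, Q, -, rfl⟩
    exact mul_nonneg (rowNormMax_nonneg _) (rowNormMax_nonneg _)
  have hbdd₂ : BddBelow S₂ := by
    refine ⟨0, ?_⟩
    rintro b ⟨d, P, Q, -, rfl⟩
    exact mul_nonneg (rowNormMax_nonneg _) (rowNormMax_nonneg _)
  have hne₁ : S₁.Nonempty := ⟨_, n, R * X * Cᵀ, 1, by rw [Matrix.transpose_one, Matrix.mul_one], rfl⟩
  have hne₂ : S₂.Nonempty := ⟨_, ℓ, X, 1, by rw [Matrix.transpose_one, Matrix.mul_one], rfl⟩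
  show sInf S₁ = sInf S₂
  apply le_antisymm
  · refine csInf_le_csInf hbdd₁ hne₂ ?_
    rintro b ⟨d, P, Q, hfac, rfl⟩
    refine ⟨d, R * P, C * Q, ?_, ?_⟩
    · rw [Matrix.transpose_mul, hfac, Matrix.mul_assoc, Matrix.mul_assoc, Matrix.mul_assoc]
    · rw [mul_blockexp_left hr, mul_blockexp_left hc,
        rowNormMax_submatrix_eq P r hrs, rowNormMax_submatrix_eq Q c hcs]
  · refine le_csInf hne₁ ?_
    rintro b ⟨d, P', Q', hfac, rfl⟩
    set s := Function.surjInv hrs with hs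
    set t := Function.surjInv hcs with ht
    have hXs : X = P'.submatrix s id * (Q'.submatrix t id)ᵀ := by
      ext j l
      have hentry : (R * X * Cᵀ) (s j) (t l) = X j l := by
        rw [mul_blockexp_right hc, mul_blockexp_left hr]
        simp [Matrix.submatrix_apply, hs, ht, Function.surjInv_eq hrs, Function.surjInv_eq hcs]
      rw [← hentry, hfac]
      simp [Matrix.mul_apply, Matrix.submatrix_apply, Matrix.transpose_apply]
    calc sInf S₂ ≤ rowNormMax (P'.submatrix s id) * rowNormMax (Q'.submatrix t id) :=
          csInf_le hbdd₂ ⟨d, _, _, hXs, rfl⟩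
      _ ≤ rowNormMax P' * rowNormMax Q' :=
          mul_le_mul (rowNormMax_submatrix_le P' s) (rowNormMax_submatrix_le Q' t)
            (rowNormMax_nonneg _) (rowNormMax_nonneg _)
end

section
/- Let γ ∈ (0,1], y ∈ {-1,1}, ȳ ∈ ℝ, let Y be uniformly distributed on (-γ, γ), and let ŷ = sign(ȳ - Y). Then 2·P(ŷ ≠ y) ≤ h_γ(y, ȳ), where h_γ(y, ȳ) := (1/γ)·max(γ - y·ȳ, 0) is the hinge loss at margin γ. -/
open MeasureTheory

theorem stmt_17 (γ : ℝ) (hγ : γ ∈ Set.Ioc (0 : ℝ) 1) (y ybar : ℝ) (hy : y = 1 ∨ y = -1) :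
    -- P(ŷ ≠ y) for Y uniform on (-γ, γ) and ŷ = sign(ybar - Y)
    2 * ((volume {v : ℝ | v ∈ Set.Ioo (-γ) γ ∧
          (if 0 < ybar - v then (1 : ℝ) else -1) ≠ y}).toReal / (2 * γ))
      ≤ (1 / γ) * max (γ - y * ybar) 0 := by
  obtain ⟨hγ0, hγ1⟩ := hγ
  set S := {v : ℝ | v ∈ Set.Ioo (-γ) γ ∧ (if 0 < ybar - v then (1 : ℝ) else -1) ≠ y} with hS
  have key : (volume S).toReal ≤ max (γ - y * ybar) 0 := by
    rcases hy with rfl | rfl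
    · have hsub : S ⊆ Set.Ico (max ybar (-γ)) γ := by
        rintro v ⟨⟨h1, h2⟩, h3⟩
        have hv : ¬ (0 < ybar - v) := by
          intro h
          apply h3
          simp [h]
        push_neg at hv
        exact ⟨max_le (by linarith) h1.le, h2⟩
      have hmono := measure_mono (μ := volume) hsub
      rw [Real.volume_Ico] at hmono
      calc (volume S).toReal ≤ (ENNReal.ofReal (γ - max ybar (-γ))).toReal :=
            ENNReal.toReal_mono (by simp) hmono
        _ ≤ max (γ - 1 * ybar) 0 := by
            rcases le_or_gt 0 (γ - max ybar (-γ)) with h | h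
            · rw [ENNReal.toReal_ofReal h]
              have : γ - max ybar (-γ) ≤ γ - 1 * ybar := by
                have := le_max_left ybar (-γ); linarith
              exact this.trans (le_max_left _ _)
            · rw [ENNReal.ofReal_eq_zero.mpr h.le]
              simp
    · have hsub : S ⊆ Set.Ioc (-γ) (min γ ybar) := by
        rintro v ⟨⟨h1, h2⟩, h3⟩
        have hv : 0 < ybar - v := by
          by_contra h
          apply h3
          simp [h]
        exact ⟨h1, le_min h2.le (by linarith)⟩
      have hmono := measure_mono (μ := volume) hsub
      rw [Real.volume_Ioc] at hmono
      calc (volume S).toReal ≤ (ENNReal.ofReal (min γ ybar - (-γ))).toReal :=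
            ENNReal.toReal_mono (by simp) hmono
        _ ≤ max (γ - (-1) * ybar) 0 := by
            rcases le_or_gt 0 (min γ ybar - (-γ)) with h | h
            · rw [ENNReal.toReal_ofReal h]
              have : min γ ybar - (-γ) ≤ γ - (-1) * ybar := by
                have := min_le_right γ ybar; linarith
              exact this.trans (le_max_left _ _)
            · rw [ENNReal.ofReal_eq_zero.mpr h.le]
              simp
  have hm0 : 0 ≤ (volume S).toReal := ENNReal.toReal_nonneg
  have heq : 2 * ((volume S).toReal / (2 * γ)) = (volume S).toReal / γ := by
    field_simp
  rw [heq]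
  have : (volume S).toReal / γ ≤ (max (γ - y * ybar) 0) / γ := by
    gcongr
  calc (volume S).toReal / γ ≤ (max (γ - y * ybar) 0) / γ := this
    _ = (1 / γ) * max (γ - y * ybar) 0 := by ring
end
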